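/- Let n ≥ 2 be an integer, let α be a real number with 0 ≤ α < 1, and let Θ ∈ L¹(ℝ²) ∩ L^∞(ℝ²) satisfy Θ(R_{2π/n} Y) = Θ(Y) for all Y ∈ ℝ². Define V(X) := C_α ∫_{ℝ²} (X − Y)^⊥ / |X − Y|^{2+α} · Θ(Y) dY. Then: (i) for every integer k and every X ∈ ℝ², V(X) = R_{−2πk/n}( V(R_{2πk/n} X) ); and (ii) ∫_{B_R} V(X) dX = 0 for every R > 0, where B_R is the ball of radius R centered at the origin. -/

import Mathlib

open MeasureTheory

/-- `C_α = (2^α/(2π)) Γ(1+α/2)/Γ(1-α/2)`. -/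
noncomputable def Cconst (α : ℝ) : ℝ :=
  ((2:ℝ) ^ α / (2 * Real.pi)) * Real.Gamma (1 + α/2) / Real.Gamma (1 - α/2)

/-- The α-Biot-Savart velocity, written on `ℝ² ≅ ℂ`: the perpendicular
`(a,b)^⊥ = (-b,a)` corresponds to multiplication by `i`, so
`V(X) = C_α ∫ (X-Y)^⊥/|X-Y|^{2+α} Θ(Y) dY = C_α ∫ i(X-Y) Θ(Y)/|X-Y|^{2+α} dY`. -/
noncomputable def Vfield (α : ℝ) (Θ : ℂ → ℝ) (X : ℂ) : ℂ :=
  (Cconst α : ℂ) *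
    ∫ Y : ℂ, Complex.I * (X - Y) * (Θ Y : ℂ) / ((‖X - Y‖ ^ (2+α) : ℝ) : ℂ)

/-- Change of variables under rotation, full plane. -/
lemma rot_integral (u : ℂ) (hu : ‖u‖ = 1) (f : ℂ → ℂ) :
    (∫ Y : ℂ, f (u * Y)) = ∫ Y : ℂ, f Y := by
  have hu' : u ∈ Metric.sphere (0:ℂ) 1 := by simp [Complex.dist_eq, hu]
  set a : Circle := ⟨u, hu'⟩
  have mp := (rotation a).measurePreserving
  have emb := (rotation a).toHomeomorph.measurableEmbedding
  simpa [rotation_apply] using mp.integral_comp emb f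

/-- Change of variables under rotation, on a ball. -/
lemma rot_setIntegral (u : ℂ) (hu : ‖u‖ = 1) (f : ℂ → ℂ) (R : ℝ) :
    (∫ Y in Metric.ball (0:ℂ) R, f (u * Y)) = ∫ Y in Metric.ball (0:ℂ) R, f Y := by
  have hu' : u ∈ Metric.sphere (0:ℂ) 1 := by simp [Complex.dist_eq, hu]
  set a : Circle := ⟨u, hu'⟩
  have mp := (rotation a).measurePreserving
  have emb := (rotation a).toHomeomorph.measurableEmbedding
  have key := mp.setIntegral_preimage_emb emb f (Metric.ball (0:ℂ) R)
  have hpre : (rotation a) ⁻¹' (Metric.ball (0:ℂ) R) = Metric.ball (0:ℂ) R := by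
    ext z
    simp [Metric.mem_ball, Complex.dist_eq, rotation_apply, map_mul, hu, map_zero, sub_zero]
  rw [hpre] at key
  simpa [rotation_apply] using key

/-- Equivariance of the velocity field under a rotation leaving `Θ` invariant. -/
lemma Vfield_rot (α : ℝ) (Θ : ℂ → ℝ) (u : ℂ) (hu : ‖u‖ = 1)
    (hΘ : ∀ Y, Θ (u * Y) = Θ Y) (X : ℂ) :
    Vfield α Θ (u * X) = u * Vfield α Θ X := by
  unfold Vfield
  have key := rot_integral u hu
    (fun Y => Complex.I * (u * X - Y) * (Θ Y : ℂ) /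
      ((‖u * X - Y‖ ^ (2+α) : ℝ) : ℂ))
  have heq : ∀ Z : ℂ,
      Complex.I * (u * X - u * Z) * (Θ (u * Z) : ℂ) /
        ((‖u * X - u * Z‖ ^ (2+α) : ℝ) : ℂ)
      = u * (Complex.I * (X - Z) * (Θ Z : ℂ) /
        ((‖X - Z‖ ^ (2+α) : ℝ) : ℂ)) := by
    intro Z
    have h1 : u * X - u * Z = u * (X - Z) := by ring
    rw [h1, hΘ, norm_mul, hu, one_mul]
    ring
  rw [← key]
  simp only [heq]
  rw [integral_const_mul]
  ring

theorem stmt13 (n : ℕ) (hn : 2 ≤ n) (α : ℝ) (hα0 : 0 ≤ α) (hα1 : α < 1)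
    (Θ : ℂ → ℝ) (hL1 : Integrable Θ) (hLinf : MemLp Θ ⊤ volume)
    (hsym : ∀ Y : ℂ, Θ (Complex.exp (2*Real.pi*Complex.I/(n:ℂ)) * Y) = Θ Y) :
    (∀ k : ℤ, ∀ X : ℂ,
      Vfield α Θ X =
        Complex.exp (-(2*Real.pi*(k:ℂ)/(n:ℂ)) * Complex.I) *
          Vfield α Θ (Complex.exp ((2*Real.pi*(k:ℂ)/(n:ℂ)) * Complex.I) * X)) ∧
    (∀ R : ℝ, 0 < R → (∫ X in Metric.ball (0:ℂ) R, Vfield α Θ X) = 0) := by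
  have hn0 : (n:ℂ) ≠ 0 := Nat.cast_ne_zero.mpr (by omega)
  set c : ℂ := Complex.exp (((2*Real.pi/n : ℝ) : ℂ) * Complex.I) with hc
  have hcabs : ‖c‖ = 1 := Complex.norm_exp_ofReal_mul_I _
  have hc0 : c ≠ 0 := Complex.exp_ne_zero _
  have hcsym : ∀ Y : ℂ, Θ (c * Y) = Θ Y := by
    intro Y
    have : (((2*Real.pi/n : ℝ) : ℂ) * Complex.I) = 2*Real.pi*Complex.I/(n:ℂ) := by
      push_cast; ring
    rw [hc, this]; exact hsym Y
  -- invariance of Θ under integer powers of c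
  have hpow : ∀ k : ℤ, ∀ Y : ℂ, Θ (c ^ k * Y) = Θ Y := by
    intro k
    induction k using Int.induction_on with
    | zero => intro Y; simp
    | succ m ih =>
        intro Y
        have : c ^ ((m:ℤ)+1) * Y = c * (c ^ (m:ℤ) * Y) := by
          rw [zpow_add_one₀ hc0]; ring
        rw [this, hcsym, ih]
    | pred m ih =>
        intro Y
        have h1 := hcsym (c ^ (-(m:ℤ)-1) * Y)
        have : c * (c ^ (-(m:ℤ)-1) * Y) = c ^ (-(m:ℤ)) * Y := by
          rw [zpow_sub_one₀ hc0, mul_comm (c ^ (-(m:ℤ))) c⁻¹, ← mul_assoc, ← mul_assoc,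
            mul_inv_cancel₀ hc0, one_mul]
        rw [this] at h1
        rw [← h1]
        exact ih Y
  have hckabs : ∀ k : ℤ, ‖c ^ k‖ = 1 := by
    intro k; rw [norm_zpow, hcabs, one_zpow]
  -- the exponent in the statement equals c^k
  have hexp : ∀ k : ℤ, Complex.exp ((2*Real.pi*(k:ℂ)/(n:ℂ)) * Complex.I) = c ^ k := by
    intro k
    rw [hc, ← Complex.exp_int_mul]
    congr 1
    push_cast; ring
  have part1 : ∀ k : ℤ, ∀ X : ℂ,
      Vfield α Θ X =
        Complex.exp (-(2*Real.pi*(k:ℂ)/(n:ℂ)) * Complex.I) *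
          Vfield α Θ (Complex.exp ((2*Real.pi*(k:ℂ)/(n:ℂ)) * Complex.I) * X) := by
    intro k X
    have hneg : Complex.exp (-(2*Real.pi*(k:ℂ)/(n:ℂ)) * Complex.I)
        = (c ^ k)⁻¹ := by
      rw [← hexp k, ← Complex.exp_neg]
      congr 1; ring
    rw [hexp k, hneg, Vfield_rot α Θ (c ^ k) (hckabs k) (hpow k) X]
    rw [← mul_assoc, inv_mul_cancel₀ (zpow_ne_zero k hc0), one_mul]
  refine ⟨part1, ?_⟩
  intro R hR
  set I := ∫ X in Metric.ball (0:ℂ) R, Vfield α Θ X with hI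
  have h1 : (∫ X in Metric.ball (0:ℂ) R, Vfield α Θ (c * X)) = I :=
    rot_setIntegral c hcabs (Vfield α Θ) R
  have h2 : (∫ X in Metric.ball (0:ℂ) R, Vfield α Θ (c * X)) = c * I := by
    have : ∀ X : ℂ, Vfield α Θ (c * X) = c * Vfield α Θ X :=
      Vfield_rot α Θ c hcabs hcsym
    simp only [this]
    rw [integral_const_mul]
  have hcI : c * I = I := by rw [← h2, h1]
  have hc1 : c ≠ 1 := by
    intro h
    rw [hc, Complex.exp_eq_one_iff] at h
    obtain ⟨m, hm⟩ := h
    have hIne : (Complex.I : ℂ) ≠ 0 := Complex.I_ne_zero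
    have hm' : ((2*Real.pi/n : ℝ) : ℂ) = (m : ℂ) * (2 * Real.pi) := by
      have : ((2*Real.pi/n : ℝ) : ℂ) * Complex.I = ((m:ℂ) * (2*Real.pi)) * Complex.I := by
        rw [hm]; ring
      exact mul_right_cancel₀ hIne this
    have hre : (2*Real.pi/n : ℝ) = (m : ℝ) * (2 * Real.pi) := by
      exact_mod_cast hm'
    have hπ : (0:ℝ) < Real.pi := Real.pi_pos
    have hnpos : (0:ℝ) < n := by exact_mod_cast (by omega : 0 < n)
    have hmval : (m : ℝ) = 1 / n := by
      field_simp at hre ⊢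
      nlinarith [hre]
    have h01 : (0:ℝ) < 1/(n:ℝ) := by positivity
    have h1n : (1:ℝ)/(n:ℝ) < 1 := by
      rw [div_lt_one hnpos]; exact_mod_cast (by omega : 1 < n)
    rcases le_or_gt m 0 with hmle | hmgt
    · have : (m:ℝ) ≤ 0 := by exact_mod_cast hmle
      linarith [hmval ▸ this]
    · have : (1:ℝ) ≤ (m:ℝ) := by exact_mod_cast hmgt
      linarith [hmval ▸ this]
  have : (c - 1) * I = 0 := by rw [sub_mul, one_mul, hcI, sub_self]
  rcases mul_eq_zero.mp this with h | h
  · exact absurd (sub_eq_zero.mp h) hc1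
  · exact h
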